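/- Let u: V̄ → ℝ be convex on V = (0,∞)² × ℝ^{n-2} with u(x) = (1/2)|x|² on ∂V. Then for all x ∈ V, u(x) ≤ (1/2)|x|² + x₁x₂. -/

import Mathlib

/-- If `u` is convex on the closed cone `V̄ = {x₁ ≥ 0, x₂ ≥ 0} ⊂ ℝⁿ` with
`u(x) = (1/2)|x|²` on `∂V = {x₁x₂ = 0, x₁, x₂ ≥ 0}`, then
`u(x) ≤ (1/2)|x|² + x₁x₂` for all `x ∈ V`. -/
theorem stmt15 (n : ℕ) (hn : 2 ≤ n) (u : (Fin n → ℝ) → ℝ)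
    (hconv : ConvexOn ℝ
      {x : Fin n → ℝ | 0 ≤ x ⟨0, by omega⟩ ∧ 0 ≤ x ⟨1, by omega⟩} u)
    (hbd : ∀ x : Fin n → ℝ, 0 ≤ x ⟨0, by omega⟩ → 0 ≤ x ⟨1, by omega⟩ →
      x ⟨0, by omega⟩ * x ⟨1, by omega⟩ = 0 → u x = (1/2) * ∑ i, (x i) ^ 2) :
    ∀ x : Fin n → ℝ, 0 < x ⟨0, by omega⟩ → 0 < x ⟨1, by omega⟩ →
      u x ≤ (1/2) * ∑ i, (x i) ^ 2 + x ⟨0, by omega⟩ * x ⟨1, by omega⟩ := by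
  intro x h0 h1
  set i0 : Fin n := ⟨0, by omega⟩
  set i1 : Fin n := ⟨1, by omega⟩
  have hne : i0 ≠ i1 := by simp [i0, i1, Fin.ext_iff]
  set a := x i0 with ha
  set b := x i1 with hb
  have hab : 0 < a + b := by linarith
  set P : Fin n → ℝ := Function.update (Function.update x i1 0) i0 (a + b) with hP
  set Q : Fin n → ℝ := Function.update (Function.update x i0 0) i1 (a + b) with hQ
  have hPi0 : P i0 = a + b := by simp [hP]
  have hPi1 : P i1 = 0 := by
    simp [hP, Function.update_of_ne hne.symm]
  have hQi0 : Q i0 = 0 := by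
    simp [hQ, Function.update_of_ne hne]
  have hQi1 : Q i1 = a + b := by simp [hQ]
  have hPother : ∀ i, i ≠ i0 → i ≠ i1 → P i = x i := by
    intro i hi0 hi1; simp [hP, Function.update_of_ne hi0, Function.update_of_ne hi1]
  have hQother : ∀ i, i ≠ i0 → i ≠ i1 → Q i = x i := by
    intro i hi0 hi1; simp [hQ, Function.update_of_ne hi0, Function.update_of_ne hi1]
  -- sum splitting
  have hsplit : ∀ v : Fin n → ℝ, ∑ i, (v i) ^ 2 =
      v i0 ^ 2 + v i1 ^ 2 + ∑ i ∈ (Finset.univ.erase i0).erase i1, (v i) ^ 2 := by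
    intro v
    have h1' := Finset.add_sum_erase Finset.univ (fun i => v i ^ 2) (Finset.mem_univ i0)
    have h2' := Finset.add_sum_erase (Finset.univ.erase i0) (fun i => v i ^ 2)
      (Finset.mem_erase.mpr ⟨hne.symm, Finset.mem_univ i1⟩)
    linarith
  have hrest : ∀ i ∈ (Finset.univ.erase i0).erase i1, (P i) ^ 2 = (x i) ^ 2 := by
    intro i hi
    rcases Finset.mem_erase.mp hi with ⟨hi1, hi'⟩
    rw [hPother i (Finset.mem_erase.mp hi').1 hi1]
  have hrestQ : ∀ i ∈ (Finset.univ.erase i0).erase i1, (Q i) ^ 2 = (x i) ^ 2 := by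
    intro i hi
    rcases Finset.mem_erase.mp hi with ⟨hi1, hi'⟩
    rw [hQother i (Finset.mem_erase.mp hi').1 hi1]
  have hPsum : ∑ i, (P i) ^ 2 = ∑ i, (x i) ^ 2 + 2 * a * b := by
    rw [hsplit P, hsplit x, Finset.sum_congr rfl hrest, hPi0, hPi1]
    ring
  have hQsum : ∑ i, (Q i) ^ 2 = ∑ i, (x i) ^ 2 + 2 * a * b := by
    rw [hsplit Q, hsplit x, Finset.sum_congr rfl hrestQ, hQi1, hQi0]
    ring
  -- boundary values
  have hPval : u P = (1/2) * ∑ i, (P i) ^ 2 := by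
    apply hbd P (by rw [show P ⟨0, by omega⟩ = P i0 from rfl, hPi0]; linarith)
    · rw [show P ⟨1, by omega⟩ = P i1 from rfl, hPi1]
    · rw [show P ⟨1, by omega⟩ = P i1 from rfl, hPi1]; ring
  have hQval : u Q = (1/2) * ∑ i, (Q i) ^ 2 := by
    apply hbd Q (by rw [show Q ⟨0, by omega⟩ = Q i0 from rfl, hQi0])
    · rw [show Q ⟨1, by omega⟩ = Q i1 from rfl, hQi1]; linarith
    · rw [show Q ⟨0, by omega⟩ = Q i0 from rfl, hQi0]; ring
  -- convex combination
  set l : ℝ := a / (a + b) with hl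
  set m : ℝ := b / (a + b) with hm
  have hl0 : 0 ≤ l := by positivity
  have hm0 : 0 ≤ m := by positivity
  have hlm : l + m = 1 := by rw [hl, hm, ← add_div, div_self hab.ne']
  have hcomb : l • P + m • Q = x := by
    funext i
    by_cases hi0 : i = i0
    · subst hi0
      simp only [Pi.add_apply, Pi.smul_apply, smul_eq_mul, hPi0, hQi0]
      rw [hl, div_mul_cancel₀ a hab.ne']
      ring
    · by_cases hi1 : i = i1
      · subst hi1
        simp only [Pi.add_apply, Pi.smul_apply, smul_eq_mul, hPi1, hQi1]
        rw [hm, div_mul_cancel₀ b hab.ne']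
        ring
      · simp only [Pi.add_apply, Pi.smul_apply, smul_eq_mul,
          hPother i hi0 hi1, hQother i hi0 hi1]
        rw [← add_mul, hlm, one_mul]
  have hPmem : P ∈ {x : Fin n → ℝ | 0 ≤ x ⟨0, by omega⟩ ∧ 0 ≤ x ⟨1, by omega⟩} := by
    constructor
    · rw [show P ⟨0, by omega⟩ = P i0 from rfl, hPi0]; linarith
    · rw [show P ⟨1, by omega⟩ = P i1 from rfl, hPi1]
  have hQmem : Q ∈ {x : Fin n → ℝ | 0 ≤ x ⟨0, by omega⟩ ∧ 0 ≤ x ⟨1, by omega⟩} := by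
    constructor
    · rw [show Q ⟨0, by omega⟩ = Q i0 from rfl, hQi0]
    · rw [show Q ⟨1, by omega⟩ = Q i1 from rfl, hQi1]; linarith
  have := hconv.2 hPmem hQmem hl0 hm0 hlm
  rw [hcomb, hPval, hQval, hPsum, hQsum] at this
  calc u x ≤ l * ((1/2) * (∑ i, (x i) ^ 2 + 2 * a * b))
      + m * ((1/2) * (∑ i, (x i) ^ 2 + 2 * a * b)) := this
    _ = (l + m) * ((1/2) * (∑ i, (x i) ^ 2 + 2 * a * b)) := by ring
    _ = (1/2) * ∑ i, (x i) ^ 2 + a * b := by rw [hlm]; ring
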